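/- arXiv:1204.4564 — 4 statements merged into one kernel-verified Lean document; each statement's English description precedes it below -/
import Mathlib

section
/- Let p be a prime with p ≡ 1 (mod 4) and let Pal_p be the Paley graph on F_p. For any nonempty subset S ⊆ F_p, the absolute value of the character sum ∑_{i ∈ F_p} χ(∏_{j ∈ S} (i − j)) equals | |S ∪ Odd(S)| − |S ∪ Even(S)| |, where χ is the Legendre symbol mod p, Odd and Even neighborhoods are taken in Pal_p. -/
/-- Odd neighborhood. -/
def oddNbhd {V : Type*} (G : SimpleGraph V) (S : Set V) : Set V :=
  {v | Odd ((G.neighborSet v ∩ S).ncard)}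

/-- Even neighborhood. -/
def evenNbhd {V : Type*} (G : SimpleGraph V) (S : Set V) : Set V :=
  {v | Even ((G.neighborSet v ∩ S).ncard)}

/-- The Paley graph on `ZMod p`: `i ~ j` iff `i ≠ j` and `i - j` is a square
(stated symmetrically; for `p ≡ 1 [MOD 4]` the two conditions coincide). -/
def paley (p : ℕ) [Fact p.Prime] : SimpleGraph (ZMod p) where
  Adj i j := i ≠ j ∧ IsSquare (i - j) ∧ IsSquare (j - i)
  symm := ⟨fun i j ⟨h, a, b⟩ => ⟨h.symm, b, a⟩⟩
  loopless := ⟨fun i ⟨h, _⟩ => h rfl⟩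

theorem charSum_eq_odd_even_diff (p : ℕ) [Fact p.Prime] (hp4 : p % 4 = 1)
    (S : Finset (ZMod p)) (hS : S.Nonempty) :
    |∑ i : ZMod p, quadraticChar (ZMod p) (∏ j ∈ S, (i - j))| =
      |(((↑S : Set (ZMod p)) ∪ oddNbhd (paley p) ↑S).ncard : ℤ) -
        (((↑S : Set (ZMod p)) ∪ evenNbhd (paley p) ↑S).ncard : ℤ)| := by
  classical
  have hsq : IsSquare (-1 : ZMod p) := by
    rw [ZMod.exists_sq_eq_neg_one_iff]
    omega
  set D : ZMod p → ℕ := fun v => (S.filter (fun j => (paley p).Adj v j)).card with hD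
  have hadj : ∀ v ∉ S, ∀ j ∈ S, ((paley p).Adj v j ↔ IsSquare (v - j)) := by
    intro v hv j hj
    constructor
    · rintro ⟨_, h, _⟩; exact h
    · intro h
      refine ⟨fun hvj => hv (hvj ▸ hj), h, ?_⟩
      have hji : j - v = -1 * (v - j) := by ring
      rw [hji]; exact hsq.mul h
  have hchi : ∀ v ∉ S, ∀ j ∈ S,
      quadraticChar (ZMod p) (v - j) = if (paley p).Adj v j then 1 else -1 := by
    intro v hv j hj
    have hne : v - j ≠ 0 := sub_ne_zero.mpr (fun h => hv (h ▸ hj))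
    by_cases h : (paley p).Adj v j
    · simp only [h, if_true]
      exact (quadraticChar_one_iff_isSquare hne).mpr ((hadj v hv j hj).mp h)
    · simp only [h, if_false]
      rw [quadraticChar_neg_one_iff_not_isSquare]
      exact fun hs => h ((hadj v hv j hj).mpr hs)
  have hprod : ∀ v, (quadraticChar (ZMod p)) (∏ j ∈ S, (v - j)) =
      if v ∈ S then 0 else (-1 : ℤ) ^ S.card * (-1) ^ (D v) := by
    intro v
    by_cases hv : v ∈ S
    · rw [if_pos hv, Finset.prod_eq_zero hv (sub_self v), quadraticChar_zero]
    · rw [if_neg hv, map_prod]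
      calc ∏ j ∈ S, quadraticChar (ZMod p) (v - j)
          = ∏ j ∈ S, (if (paley p).Adj v j then (1 : ℤ) else -1) :=
            Finset.prod_congr rfl (fun j hj => hchi v hv j hj)
        _ = (-1 : ℤ) ^ (S.filter (fun j => ¬ (paley p).Adj v j)).card := by
            rw [Finset.prod_ite, Finset.prod_const_one, one_mul, Finset.prod_const]
        _ = (-1 : ℤ) ^ S.card * (-1) ^ (D v) := by
            have hab : (S.filter (fun j => (paley p).Adj v j)).card +
                (S.filter (fun j => ¬ (paley p).Adj v j)).card = S.card :=
              Finset.card_filter_add_card_filter_not _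
            have h1 : ((-1 : ℤ)) ^ (D v) * ((-1 : ℤ)) ^ (D v) = 1 := by
              rw [← pow_add]; exact Even.neg_one_pow ⟨D v, rfl⟩
            rw [← hab, pow_add, hD]
            linear_combination
              (-((-1 : ℤ) ^ (S.filter (fun j => ¬ (paley p).Adj v j)).card)) * h1
  have hDset : ∀ v, ((paley p).neighborSet v ∩ (↑S : Set (ZMod p))).ncard = D v := by
    intro v
    have hset : ((paley p).neighborSet v ∩ (↑S : Set (ZMod p))) =
        ↑(S.filter (fun j => (paley p).Adj v j)) := by
      ext j
      simp [SimpleGraph.neighborSet, and_comm]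
    rw [hset, Set.ncard_coe_finset]
  set O : Finset (ZMod p) := Finset.univ.filter (fun v => Odd (D v)) with hO
  set E : Finset (ZMod p) := Finset.univ.filter (fun v => Even (D v)) with hE
  have hOset : ((↑S : Set (ZMod p)) ∪ oddNbhd (paley p) ↑S) = ↑(S ∪ O) := by
    ext v
    simp [oddNbhd, hO, hDset v]
  have hEset : ((↑S : Set (ZMod p)) ∪ evenNbhd (paley p) ↑S) = ↑(S ∪ E) := by
    ext v
    simp [evenNbhd, hE, hDset v]
  rw [hOset, hEset, Set.ncard_coe_finset, Set.ncard_coe_finset]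
  have hcard : ∀ (T : Finset (ZMod p)),
      (T.card : ℤ) = ∑ v : ZMod p, (if v ∈ T then (1 : ℤ) else 0) := by
    intro T
    simp [Finset.sum_ite_mem]
  set T : ℤ := ∑ v : ZMod p, (if v ∈ S then (0 : ℤ) else (-1) ^ (D v)) with hT
  have hL : ∑ i : ZMod p, quadraticChar (ZMod p) (∏ j ∈ S, (i - j)) =
      (-1 : ℤ) ^ S.card * T := by
    rw [hT, Finset.mul_sum]
    refine Finset.sum_congr rfl (fun v _ => ?_)
    rw [hprod v]
    by_cases hv : v ∈ S <;> simp [hv]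
  have hR : (((S ∪ O).card : ℤ)) - ((S ∪ E).card : ℤ) = -T := by
    rw [hT, hcard, hcard, ← Finset.sum_sub_distrib, ← Finset.sum_neg_distrib]
    refine Finset.sum_congr rfl (fun v _ => ?_)
    by_cases hv : v ∈ S
    · simp [hv]
    · rcases Nat.even_or_odd (D v) with h | h
      · have h1 : v ∈ S ∪ E :=
          Finset.mem_union.mpr (Or.inr (Finset.mem_filter.mpr ⟨Finset.mem_univ v, h⟩))
        have h2 : v ∉ S ∪ O := by
          simp only [Finset.mem_union, hO, Finset.mem_filter, Finset.mem_univ, true_and]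
          push_neg
          exact ⟨hv, Nat.not_odd_iff_even.mpr h⟩
        rw [if_neg h2, if_pos h1, if_neg hv, h.neg_one_pow]; ring
      · have h1 : v ∈ S ∪ O :=
          Finset.mem_union.mpr (Or.inr (Finset.mem_filter.mpr ⟨Finset.mem_univ v, h⟩))
        have h2 : v ∉ S ∪ E := by
          simp only [Finset.mem_union, hE, Finset.mem_filter, Finset.mem_univ, true_and]
          push_neg
          exact ⟨hv, Nat.not_even_iff_odd.mpr h⟩
        rw [if_pos h1, if_neg h2, if_neg hv, h.neg_one_pow]; ring
  rw [hL, hR, abs_mul, abs_neg]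
  have habs : |(-1 : ℤ) ^ S.card| = 1 := by
    rw [abs_pow, abs_neg, abs_one, one_pow]
  rw [habs, one_mul]
end

section
/- For any natural numbers n ≥ 1 and k with 0 ≤ k ≤ n, the partial binomial sum satisfies ∑_{j=0}^{k} C(n, j) ≤ 2^{n·H(k/n)} when k/n ≤ 1/2, where H is the binary entropy function H(t) = −t·log₂(t) − (1−t)·log₂(1−t) (with H(0) = H(1) = 0). -/
/-- Binary entropy function (base-2 logarithms); `Real.logb 2 0 = 0`
gives `binEnt 0 = binEnt 1 = 0` automatically. -/
noncomputable def binEnt (t : ℝ) : ℝ :=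
  -t * Real.logb 2 t - (1 - t) * Real.logb 2 (1 - t)

theorem sum_choose_le_two_rpow_entropy (n k : ℕ) (hn : 1 ≤ n) (hk : k ≤ n)
    (hhalf : (k : ℝ) / n ≤ 1/2) :
    (∑ j ∈ Finset.range (k + 1), (n.choose j : ℝ)) ≤
      Real.rpow 2 ((n : ℝ) * binEnt ((k : ℝ) / n)) := by
  have hn0 : (0:ℝ) < n := by exact_mod_cast hn
  rcases Nat.eq_zero_or_pos k with hk0 | hkpos
  · subst hk0
    simp [binEnt, Real.logb, Real.rpow_natCast]
  · set p : ℝ := (k:ℝ)/n with hp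
    have hp0 : 0 < p := by
      apply div_pos _ hn0
      exact_mod_cast hkpos
    have h1p : 0 < 1 - p := by
      rw [hp]; linarith
    have hple : p ≤ 1 - p := by linarith
    have hpn : (n:ℝ) * p = k := by
      rw [hp]; field_simp
    have hprod : 0 < p^k * (1-p)^(n-k) := by positivity
    have key : (∑ j ∈ Finset.range (k+1), (n.choose j : ℝ)) * (p^k * (1-p)^(n-k)) ≤ 1 := by
      rw [Finset.sum_mul]
      calc ∑ j ∈ Finset.range (k+1), (n.choose j : ℝ) * (p^k * (1-p)^(n-k))
          ≤ ∑ j ∈ Finset.range (k+1), p^j * (1-p)^(n-j) * (n.choose j : ℝ) := by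
            apply Finset.sum_le_sum
            intro j hj
            have hjk : j ≤ k := Nat.lt_succ_iff.mp (Finset.mem_range.mp hj)
            have h1 : p^k = p^j * p^(k-j) := by
              rw [← pow_add, Nat.add_sub_cancel' hjk]
            have h2 : (1-p)^(n-j) = (1-p)^(n-k) * (1-p)^(k-j) := by
              rw [← pow_add]
              congr 1
              omega
            rw [h1, h2]
            have h3 : p^(k-j) ≤ (1-p)^(k-j) := pow_le_pow_left₀ hp0.le hple _
            have hc : (0:ℝ) ≤ (n.choose j : ℝ) := by positivity
            nlinarith [pow_pos hp0 j, pow_pos h1p (n-k), pow_nonneg hp0.le (k-j),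
              mul_le_mul_of_nonneg_left h3 (mul_nonneg (pow_pos hp0 j).le (pow_pos h1p (n-k)).le)]
        _ ≤ ∑ j ∈ Finset.range (n+1), p^j * (1-p)^(n-j) * (n.choose j : ℝ) := by
            apply Finset.sum_le_sum_of_subset_of_nonneg
            · exact Finset.range_subset_range.mpr (by omega)
            · intro j _ _
              positivity
        _ = 1 := by
            rw [← add_pow]
            norm_num
    have hrhs : Real.rpow 2 ((n : ℝ) * binEnt p) = (p^k * (1-p)^(n-k))⁻¹ := by
      have e1 : (n : ℝ) * binEnt p =
          (-(k:ℝ)) * Real.logb 2 p + (-(((n-k : ℕ)):ℝ)) * Real.logb 2 (1-p) := by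
        rw [Nat.cast_sub hk]
        unfold binEnt
        linear_combination (Real.logb 2 (1-p) - Real.logb 2 p) * hpn
      rw [e1]
      show (2:ℝ) ^ ((-(k:ℝ)) * Real.logb 2 p + (-(((n-k : ℕ)):ℝ)) * Real.logb 2 (1-p)) = (p^k * (1-p)^(n-k))⁻¹
      rw [Real.rpow_add (by norm_num : (0:ℝ) < 2)]
      have f : ∀ (x : ℝ) (m : ℕ), 0 < x →
          (2:ℝ) ^ ((-(m:ℝ)) * Real.logb 2 x) = (x^m)⁻¹ := by
        intro x m hx
        rw [mul_comm, Real.rpow_mul (by norm_num : (0:ℝ) ≤ 2),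
          Real.rpow_logb (by norm_num) (by norm_num) hx,
          Real.rpow_neg hx.le, Real.rpow_natCast]
      rw [f p k hp0, f (1-p) (n-k) h1p, mul_inv]
    rw [hrhs, ← one_div, le_div_iff₀ hprod]
    exact key
end

section
/- For c = 0.110, the inequality H(d) + H(2c − d) − 1 ≤ 0 holds for all d ∈ (0, 2c), where H is the binary entropy function. -/
lemma nat_key : (100:ℕ)^100 ≤ 2^50 * 11^11 * 89^89 := by norm_num

lemma real_key : ((100:ℝ)/11)^(11:ℕ) * ((100:ℝ)/89)^(89:ℕ) ≤ 2^(50:ℕ) := by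
  rw [div_pow, div_pow, div_mul_div_comm, div_le_iff₀ (by positivity)]
  have : ((100:ℝ))^(100:ℕ) ≤ 2^(50:ℕ) * 11^(11:ℕ) * 89^(89:ℕ) := by exact_mod_cast nat_key
  calc ((100:ℝ))^(11:ℕ) * 100^(89:ℕ) = 100^(100:ℕ) := by ring
    _ ≤ 2^(50:ℕ) * 11^(11:ℕ) * 89^(89:ℕ) := this
    _ = 2^(50:ℕ) * (11^(11:ℕ) * 89^(89:ℕ)) := by ring

lemma binEntropy_le : Real.binEntropy (11/100) ≤ Real.log 2 / 2 := by
  rw [Real.binEntropy]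
  have h1 : ((11:ℝ)/100)⁻¹ = 100/11 := by norm_num
  have h2 : (1 - (11:ℝ)/100) = 89/100 := by norm_num
  have h3 : ((89:ℝ)/100)⁻¹ = 100/89 := by norm_num
  rw [h1, h2, h3]
  have key : Real.log (((100:ℝ)/11)^(11:ℕ) * ((100:ℝ)/89)^(89:ℕ)) ≤ Real.log (2^(50:ℕ)) :=
    Real.log_le_log (by positivity) real_key
  rw [Real.log_mul (by positivity) (by positivity), Real.log_pow, Real.log_pow,
    Real.log_pow] at key
  push_cast at key
  linarith

lemma binEnt_eq (t : ℝ) : binEnt t = Real.binEntropy t / Real.log 2 := by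
  rw [binEnt, Real.binEntropy, Real.logb, Real.logb, Real.log_inv, Real.log_inv]
  field_simp
  ring

theorem entropy_condition_bipartite :
    ∀ d : ℝ, 0 < d → d < 2 * (11/100 : ℝ) →
      binEnt d + binEnt (2 * (11/100) - d) - 1 ≤ 0 := by
  intro d hd0 hd1
  have hlog2 : (0:ℝ) < Real.log 2 := Real.log_pos (by norm_num)
  have hconc := Real.strictConcave_binEntropy.concaveOn
  have hmem1 : d ∈ Set.Icc (0:ℝ) 1 := ⟨hd0.le, by linarith⟩
  have hmem2 : (2 * (11/100:ℝ) - d) ∈ Set.Icc (0:ℝ) 1 := ⟨by linarith, by linarith⟩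
  have hsum := hconc.2 hmem1 hmem2 (by norm_num : (0:ℝ) ≤ 1/2)
    (by norm_num : (0:ℝ) ≤ 1/2) (by norm_num)
  have hmid : (1/2 : ℝ) • d + (1/2 : ℝ) • (2 * (11/100:ℝ) - d) = 11/100 := by
    simp only [smul_eq_mul]; ring
  rw [hmid] at hsum
  simp only [smul_eq_mul] at hsum
  have hle := binEntropy_le
  rw [binEnt_eq, binEnt_eq, ← add_div, sub_nonpos,
    div_le_iff₀ hlog2, one_mul]
  linarith
end

section
/- For c = 0.189, the inequality (1 − d)·(H((c − d)/(1 − d)) − 1) + H(d) ≤ 0 holds for all d ∈ (0, c], where H is the binary entropy function. -/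
lemma key_tangent (x y : ℝ) (hx : 0 ≤ x) (hy : 0 < y) :
    x * Real.log y - x * Real.log x ≤ y - x := by
  rcases hx.eq_or_lt with h | h
  · rw [← h]; simpa using hy.le
  · have h1 := Real.log_le_sub_one_of_pos (show 0 < y / x by positivity)
    rw [Real.log_div hy.ne' h.ne'] at h1
    have h2 := mul_le_mul_of_nonneg_left h1 h.le
    have h3 : x * (y / x - 1) = y - x := by field_simp
    nlinarith [h2]

lemma numeric : 0 ≤ 189/1000 * Real.log (63/1000) + 811/1000 * Real.log (811/1000) + Real.log 2 := by
  have l2u : Real.log 2 < 0.6931471808 := Real.log_two_lt_d9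
  have l2l : (0:ℝ) < Real.log 2 := Real.log_pos (by norm_num)
  have h126 : (1:ℝ)/126 ≤ Real.log (126/125) := by
    have h := Real.log_le_sub_one_of_pos (show (0:ℝ) < 125/126 by norm_num)
    have e : Real.log ((125:ℝ)/126) = - Real.log (126/125) := by
      rw [← Real.log_inv]; norm_num
    rw [e] at h; linarith
  have h63 : Real.log (63/1000) = Real.log (126/125) - 4 * Real.log 2 := by
    rw [show (63:ℝ)/1000 = (126/125) / 2^4 by norm_num,
        Real.log_div (by norm_num) (by positivity), Real.log_pow]
    push_cast; ring
  have hs : (0:ℝ) ≤ Real.log ((811/1000:ℝ)^43 * 2^13) := Real.log_nonneg (by norm_num)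
  have h811 : Real.log ((811/1000:ℝ)^43 * 2^13)
      = 43 * Real.log (811/1000) + 13 * Real.log 2 := by
    rw [Real.log_mul (by positivity) (by positivity), Real.log_pow, Real.log_pow]
    push_cast; ring
  rw [h811] at hs
  linarith

theorem entropy_condition_general :
    ∀ d : ℝ, 0 < d → d ≤ (189/1000 : ℝ) →
      (1 - d) * (binEnt (((189/1000 : ℝ) - d) / (1 - d)) - 1) + binEnt d ≤ 0 := by
  intro d hd hdc
  have h1d : (0:ℝ) < 1 - d := by linarith
  have hlog2 : (0:ℝ) < Real.log 2 := Real.log_pos (by norm_num)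
  have expand : (1 - d) * (binEnt (((189/1000 : ℝ) - d) / (1 - d)) - 1) + binEnt d
      = (-((189/1000 - d) * Real.log (189/1000 - d)) - d * Real.log d
          - (811/1000) * Real.log (811/1000) - (1 - d) * Real.log 2) / Real.log 2 := by
    rcases eq_or_lt_of_le hdc with he | hlt
    · subst he
      have e0 : (189/1000 - 189/1000 : ℝ) / (1 - 189/1000) = 0 := by norm_num
      have e1 : (1:ℝ) - 189/1000 = 811/1000 := by norm_num
      rw [e0, e1]
      simp only [binEnt, Real.logb, Real.log_zero, Real.log_one, sub_zero, sub_self]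
      field_simp
      ring
    · have hcd : (0:ℝ) < 189/1000 - d := by linarith
      have e1 : 1 - (189/1000 - d) / (1 - d) = (811/1000) / (1 - d) := by
        field_simp; ring
      simp only [binEnt, Real.logb, e1,
        Real.log_div hcd.ne' h1d.ne',
        Real.log_div (show (811/1000:ℝ) ≠ 0 by norm_num) h1d.ne']
      field_simp
      ring
  rw [expand]
  apply div_nonpos_of_nonpos_of_nonneg _ hlog2.le
  have hkey1 := key_tangent (189/1000 - d) (63/1000) (by linarith) (by norm_num)
  have hkey2 := key_tangent d (126/1000) hd.le (by norm_num)
  have hsplit : Real.log (126/1000 : ℝ) = Real.log (63/1000) + Real.log 2 := by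
    rw [show (126:ℝ)/1000 = (63/1000) * 2 by norm_num,
        Real.log_mul (by norm_num) (by norm_num)]
  rw [hsplit] at hkey2
  have hnum := numeric
  nlinarith [hkey1, hkey2, hnum]
end
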